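/- Let E be a finite-dimensional complex inner product space and let A : E → E be an antiunitary involution, i.e. A is conjugate-linear (A(x+y) = A x + A y and A(c • x) = (conj c) • A x for all c ∈ ℂ), satisfies ⟪A x, A y⟫ = conj ⟪x, y⟫ for all x, y ∈ E, and A ∘ A = id. Then there exists an orthonormal basis {α_i} of E such that A α_i = α_i for every i. -/

import Mathlib

open scoped InnerProductSpace

/-- Wigner's normal form for antiunitary involutions (Lemma 1 of the paper):
an antiunitary involution `A` on a finite-dimensional complex inner product space
admits an orthonormal basis of fixed vectors. -/
theorem stmt_0 {E : Type*} [NormedAddCommGroup E] [InnerProductSpace ℂ E]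
    [FiniteDimensional ℂ E]
    (A : E → E)
    (hadd : ∀ x y : E, A (x + y) = A x + A y)
    (hsmul : ∀ (c : ℂ) (x : E), A (c • x) = (starRingEnd ℂ) c • A x)
    (hinner : ∀ x y : E, ⟪A x, A y⟫_ℂ = (starRingEnd ℂ) ⟪x, y⟫_ℂ)
    (hinv : ∀ x : E, A (A x) = x) :
    ∃ b : OrthonormalBasis (Fin (Module.finrank ℂ E)) ℂ E,
      ∀ i, A (b i) = b i := by
  classical
  letI : InnerProductSpace ℝ E := InnerProductSpace.rclikeToReal ℂ E
  have hzero : A 0 = 0 := by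
    have := hsmul 0 0
    simpa using this
  -- the fixed-point set as a real submodule
  let F : Submodule ℝ E :=
    { carrier := {x | A x = x}
      add_mem' := by
        intro a b ha hb
        simp only [Set.mem_setOf_eq] at *
        rw [hadd, ha, hb]
      zero_mem' := hzero
      smul_mem' := by
        intro c x hx
        simp only [Set.mem_setOf_eq] at *
        have h1 : c • x = (c : ℂ) • x := (algebraMap_smul ℂ c x).symm
        rw [h1, hsmul, hx]
        simp }
  have hFmem : ∀ x : F, A (x : E) = (x : E) := fun x => x.2
  -- inner products of fixed vectors are real
  have hreal : ∀ x y : F, (⟪(x : E), (y : E)⟫_ℂ).im = 0 := by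
    intro x y
    have h := hinner (x : E) (y : E)
    rw [hFmem x, hFmem y] at h
    have := congrArg Complex.im h
    simp only [Complex.conj_im] at this
    linarith
  have hrealeq : ∀ x y : F, ⟪(x : E), (y : E)⟫_ℂ = ((⟪(x : E), (y : E)⟫_ℂ).re : ℂ) := by
    intro x y
    exact Complex.ext rfl (by simp [hreal x y])
  let b := stdOrthonormalBasis ℝ F
  let n := Module.finrank ℝ F
  let f : Fin n → E := fun i => (b i : E)
  have hon : Orthonormal ℂ f := by
    rw [orthonormal_iff_ite]
    intro i j
    have hb := b.orthonormal
    rw [orthonormal_iff_ite] at hb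
    have hij := hb i j
    have hre : (⟪(f i : E), (f j : E)⟫_ℂ).re = ⟪b i, b j⟫_ℝ := by
      rfl
    rw [hrealeq (b i) (b j)]
    show ((⟪(f i : E), (f j : E)⟫_ℂ).re : ℂ) = _
    rw [hre, hij]
    split <;> simp
  have hsp : ⊤ ≤ Submodule.span ℂ (Set.range f) := by
    -- first, F ⊆ span ℂ (range f)
    have hFsub : (F : Set E) ⊆ (Submodule.span ℂ (Set.range f) : Set E) := by
      intro y hy
      have h1 : (⟨y, hy⟩ : F) ∈ Submodule.span ℝ (Set.range (b : Fin n → F)) := by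
        have hbs := b.toBasis.span_eq
        rw [OrthonormalBasis.coe_toBasis] at hbs
        rw [hbs]; trivial
      have h2 : y ∈ Submodule.map F.subtype (Submodule.span ℝ (Set.range (b : Fin n → F))) :=
        ⟨⟨y, hy⟩, h1, rfl⟩
      rw [Submodule.map_span] at h2
      have h3 : F.subtype '' Set.range (b : Fin n → F) = Set.range f := by
        ext z
        simp [f, Set.mem_image, Set.mem_range]
        exact Iff.rfl
      rw [h3] at h2
      exact Submodule.span_subset_span ℝ ℂ _ h2
    intro x _
    -- decompose x = u + I • v with u, v ∈ F
    have hsub : ∀ a c : E, A (a - c) = A a - A c := by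
      intro a c
      have h1 : A (-c) = -A c := by
        have := hsmul (-1) c
        simpa using this
      rw [sub_eq_add_neg, hadd, h1, sub_eq_add_neg]
    have hu : A ((2⁻¹ : ℂ) • (x + A x)) = (2⁻¹ : ℂ) • (x + A x) := by
      rw [hsmul, hadd, hinv]
      simp [map_inv₀, Complex.conj_ofNat, add_comm]
    have hv : A ((-Complex.I * 2⁻¹) • (x - A x)) = (-Complex.I * 2⁻¹) • (x - A x) := by
      rw [hsmul, hsub, hinv]
      have hc : (starRingEnd ℂ) (-Complex.I * 2⁻¹) = -(-Complex.I * 2⁻¹) := by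
        simp [Complex.ext_iff]
      rw [hc, neg_smul, ← smul_neg, neg_sub]
    set u : E := (2⁻¹ : ℂ) • (x + A x) with hu_def
    set v : E := (-Complex.I * 2⁻¹) • (x - A x) with hv_def
    have hxuv : x = u + Complex.I • v := by
      rw [hu_def, hv_def, smul_smul]
      have : Complex.I * (-Complex.I * 2⁻¹) = (2⁻¹ : ℂ) := by
        rw [show Complex.I * (-Complex.I * 2⁻¹) = -(Complex.I * Complex.I) * 2⁻¹ by ring,
          Complex.I_mul_I]
        ring
      rw [this, smul_add, smul_sub]
      module
    have humem : u ∈ Submodule.span ℂ (Set.range f) := hFsub hu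
    have hvmem : v ∈ Submodule.span ℂ (Set.range f) := hFsub hv
    rw [hxuv]
    exact Submodule.add_mem _ humem (Submodule.smul_mem _ _ hvmem)
  let B : OrthonormalBasis (Fin n) ℂ E := OrthonormalBasis.mk hon hsp
  have hcard : n = Module.finrank ℂ E := by
    have := Module.finrank_eq_card_basis B.toBasis
    simpa using this.symm
  refine ⟨B.reindex (finCongr hcard), fun i => ?_⟩
  simp only [OrthonormalBasis.coe_reindex, Function.comp]
  have hBi : B ((finCongr hcard).symm i) = f ((finCongr hcard).symm i) := by
    simp [B, OrthonormalBasis.coe_mk]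
  rw [hBi]
  exact hFmem (b ((finCongr hcard).symm i))
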